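/- Let γ > 1, Q(v) = v^{1-γ}/(γ-1), p(v) = v^{-γ}. Fix v* > 0. Then there exist constants C > 0 and δ* > 0 such that for any 0 < δ < δ* and any v, w > 0 with |v - w| < δ and w in a fixed compact neighborhood of v*, one has Q(v|w) ≥ (p(w)^{-1/γ-1}/(2γ))|p(v)-p(w)|² − ((1+γ)/(3γ²)) p(w)^{-1/γ-2}|p(v)-p(w)|³. -/

import Mathlib

/-- Pressure `p(v) = v^(-γ)`. -/
noncomputable def pres (γ v : ℝ) : ℝ := v ^ (-γ)

/-- Internal energy `Q(v) = v^(1-γ)/(γ-1)`. -/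
noncomputable def Qint (γ v : ℝ) : ℝ := v ^ (1 - γ) / (γ - 1)

/-- Relative internal energy `Q(v|w) = Q(v) - Q(w) - Q'(w)(v-w)` with `Q'(w) = -p(w)`. -/
noncomputable def relQ (γ v w : ℝ) : ℝ :=
  Qint γ v - Qint γ w - (-(pres γ w)) * (v - w)


lemma T_ineq (γ T : ℝ) (hγ : 1 < γ) (hT : 1 ≤ T) :
    (2*γ+1) * T^(γ+1) ≤ γ + (1+γ) * T^(2*γ+1) := by
  have hT0 : (0:ℝ) < T := lt_of_lt_of_le one_pos hT
  have h2γ : (0:ℝ) < 2*γ+1 := by linarith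
  have hgm := Real.geom_mean_le_arith_mean2_weighted
      (w₁ := γ/(2*γ+1)) (w₂ := (γ+1)/(2*γ+1)) (p₁ := 1) (p₂ := T^(2*γ+1))
      (by positivity) (by positivity) zero_le_one (by positivity)
      (by field_simp; ring)
  rw [Real.one_rpow, one_mul] at hgm
  have hexp : (T^(2*γ+1))^((γ+1)/(2*γ+1)) = T^(γ+1) := by
    rw [← Real.rpow_mul hT0.le, show (2*γ+1)*((γ+1)/(2*γ+1)) = γ+1 from by
      rw [mul_comm, div_mul_cancel₀ _ h2γ.ne']]
  rw [hexp] at hgm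
  have e1 : (2*γ+1) * (γ/(2*γ+1)) = γ := by rw [mul_comm, div_mul_cancel₀ _ h2γ.ne']
  have e2 : (2*γ+1) * ((γ+1)/(2*γ+1)) = γ+1 := by rw [mul_comm, div_mul_cancel₀ _ h2γ.ne']
  calc (2*γ+1) * T^(γ+1) ≤ (2*γ+1) * (γ/(2*γ+1) * 1 + (γ+1)/(2*γ+1) * T^(2*γ+1)) :=
        mul_le_mul_of_nonneg_left hgm h2γ.le
    _ = (2*γ+1)*(γ/(2*γ+1)) + (2*γ+1)*((γ+1)/(2*γ+1)) * T^(2*γ+1) := by ring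
    _ = γ + (γ+1)*T^(2*γ+1) := by rw [e1, e2]
    _ = γ + (1+γ)*T^(2*γ+1) := by ring

lemma relQ_F_hasDerivAt (γ w A B : ℝ) (hγ : 1 < γ) {x : ℝ} (hx : 0 < x) :
    HasDerivAt (fun y => y^(1-γ)/(γ-1) - w^(1-γ)/(γ-1) + w^(-γ)*(y-w)
        - A*(w^(-γ) - y^(-γ))^2 + B*(w^(-γ) - y^(-γ))^3)
      ((w^(-γ) - x^(-γ)) - A*(2*(w^(-γ) - x^(-γ))*(γ*x^(-γ-1)))
        + B*(3*(w^(-γ) - x^(-γ))^2*(γ*x^(-γ-1)))) x := by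
  have hx0 : x ≠ 0 := hx.ne'
  have h1 : HasDerivAt (fun y : ℝ => y ^ (1-γ)) ((1-γ) * x ^ (1-γ-1)) x :=
    Real.hasDerivAt_rpow_const (Or.inl hx0)
  have h2 : HasDerivAt (fun y : ℝ => y ^ (-γ)) ((-γ) * x ^ (-γ-1)) x :=
    Real.hasDerivAt_rpow_const (Or.inl hx0)
  have h3 : HasDerivAt (fun y : ℝ => w^(-γ) - y^(-γ)) (γ * x^(-γ-1)) x := by
    have := h2.const_sub (w^(-γ))
    simpa using this
  have hc := ((((h1.div_const (γ-1)).sub_const (w^(1-γ)/(γ-1))).add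
      (((hasDerivAt_id x).sub_const w).const_mul (w^(-γ)))).sub
      ((h3.pow 2).const_mul A)).add ((h3.pow 3).const_mul B)
  refine hc.congr_deriv ?_
  rw [show (1:ℝ)-γ-1 = -γ by ring]
  have h : γ - 1 ≠ 0 := ne_of_gt (by linarith)
  field_simp
  ring

lemma main_est (γ : ℝ) (hγ : 1 < γ) {v w : ℝ} (hv : 0 < v) (hw : 0 < w) :
    w^(γ+1)/(2*γ) * |pres γ v - pres γ w|^2
      - (1+γ)/(3*γ^2) * w^(2*γ+1) * |pres γ v - pres γ w|^3 ≤ relQ γ v w := by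
  have hγ0 : (0:ℝ) < γ := by linarith
  have hB : (0:ℝ) ≤ (1+γ)/(3*γ^2) * w^(2*γ+1) :=
    mul_nonneg (div_nonneg (by linarith) (by positivity)) (Real.rpow_pos_of_pos hw _).le
  simp only [pres, relQ, Qint]
  rcases le_total w v with hwv | hvw
  · -- case w ≤ v : monotone
    set A := w^(γ+1)/(2*γ) with hA
    set B := (1+γ)/(3*γ^2) * w^(2*γ+1) with hBdef
    set f : ℝ → ℝ := fun y => y^(1-γ)/(γ-1) - w^(1-γ)/(γ-1) + w^(-γ)*(y-w)
        - A*(w^(-γ) - y^(-γ))^2 + B*(w^(-γ) - y^(-γ))^3 with hf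
    have hder : ∀ x : ℝ, 0 < x → HasDerivAt f
        ((w^(-γ) - x^(-γ)) - A*(2*(w^(-γ) - x^(-γ))*(γ*x^(-γ-1)))
          + B*(3*(w^(-γ) - x^(-γ))^2*(γ*x^(-γ-1)))) x :=
      fun x hx => relQ_F_hasDerivAt γ w A B hγ hx
    have hmono : MonotoneOn f (Set.Icc w v) := by
      apply monotoneOn_of_deriv_nonneg (convex_Icc w v)
      · intro x hx
        exact ((hder x (lt_of_lt_of_le hw hx.1)).continuousAt).continuousWithinAt
      · intro x hx
        rw [interior_Icc] at hx
        exact ((hder x (lt_of_lt_of_le hw hx.1.le)).differentiableAt).differentiableWithinAt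
      · intro x hx
        rw [interior_Icc] at hx
        have hx0 : 0 < x := lt_of_lt_of_le hw hx.1.le
        rw [(hder x hx0).deriv]
        have hu : 0 ≤ w^(-γ) - x^(-γ) :=
          sub_nonneg.2 (Real.rpow_le_rpow_of_nonpos hw hx.1.le (by linarith))
        have hxp : (0:ℝ) ≤ x^(-γ-1) := (Real.rpow_pos_of_pos hx0 _).le
        have h1 : w^(γ+1)*x^(-γ-1) ≤ 1 := by
          have hle : w^(γ+1) ≤ x^(γ+1) := Real.rpow_le_rpow hw.le hx.1.le (by linarith)
          have hxe : x^(-γ-1) = (x^(γ+1))⁻¹ := by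
            rw [show -γ-1 = -(γ+1) by ring, Real.rpow_neg hx0.le]
          rw [hxe, ← div_eq_mul_inv]
          exact (div_le_one (Real.rpow_pos_of_pos hx0 _)).2 hle
        have hrw : A*(2*(w^(-γ) - x^(-γ))*(γ*x^(-γ-1)))
            = (w^(-γ) - x^(-γ))*(w^(γ+1)*x^(-γ-1)) := by
          rw [hA]; field_simp
        rw [hrw]
        have h2 : (w^(-γ) - x^(-γ))*(w^(γ+1)*x^(-γ-1)) ≤ (w^(-γ) - x^(-γ)) := by
          nlinarith [mul_le_mul_of_nonneg_left h1 hu]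
        have h3 : 0 ≤ B*(3*(w^(-γ) - x^(-γ))^2*(γ*x^(-γ-1))) := by
          apply mul_nonneg hB
          positivity
        linarith
    have h0 : f w ≤ f v := hmono (Set.left_mem_Icc.2 hwv) (Set.mem_Icc.2 ⟨hwv, le_refl v⟩) hwv
    have hfw : f w = 0 := by simp [hf]
    have habs : |v^(-γ) - w^(-γ)| = w^(-γ) - v^(-γ) := by
      rw [abs_of_nonpos (sub_nonpos.2 (Real.rpow_le_rpow_of_nonpos hw hwv (by linarith)))]
      ring
    rw [habs]
    have hfv := h0
    rw [hfw, hf] at hfv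
    simp only at hfv
    nlinarith [hfv]
  · -- case v ≤ w : antitone
    set A := w^(γ+1)/(2*γ) with hA
    set B := (1+γ)/(3*γ^2) * w^(2*γ+1) with hBdef
    set f : ℝ → ℝ := fun y => y^(1-γ)/(γ-1) - w^(1-γ)/(γ-1) + w^(-γ)*(y-w)
        - A*(w^(-γ) - y^(-γ))^2 + (-B)*(w^(-γ) - y^(-γ))^3 with hf
    have hder : ∀ x : ℝ, 0 < x → HasDerivAt f
        ((w^(-γ) - x^(-γ)) - A*(2*(w^(-γ) - x^(-γ))*(γ*x^(-γ-1)))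
          + (-B)*(3*(w^(-γ) - x^(-γ))^2*(γ*x^(-γ-1)))) x :=
      fun x hx => relQ_F_hasDerivAt γ w A (-B) hγ hx
    have hanti : AntitoneOn f (Set.Icc v w) := by
      apply antitoneOn_of_deriv_nonpos (convex_Icc v w)
      · intro x hx
        exact ((hder x (lt_of_lt_of_le hv hx.1)).continuousAt).continuousWithinAt
      · intro x hx
        rw [interior_Icc] at hx
        exact ((hder x (lt_of_le_of_lt hv.le hx.1 |>.trans_le (le_refl x) |> (fun h => h))).differentiableAt).differentiableWithinAt
      · intro x hx
        rw [interior_Icc] at hx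
        have hx0 : 0 < x := lt_trans hv hx.1
        rw [(hder x hx0).deriv]
        have hxw : x ≤ w := hx.2.le
        have hm : 0 ≤ x^(-γ) - w^(-γ) :=
          sub_nonneg.2 (Real.rpow_le_rpow_of_nonpos hx0 hxw (by linarith))
        have hxp : (0:ℝ) ≤ x^(-γ-1) := (Real.rpow_pos_of_pos hx0 _).le
        -- T = w/x ≥ 1
        have hT : (1:ℝ) ≤ w/x := (one_le_div hx0).2 hxw
        have hTpos : (0:ℝ) < w/x := div_pos hw hx0
        have hE1 : w^(γ+1)*x^(-γ-1) = (w/x)^(γ+1) := by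
          rw [Real.div_rpow hw.le hx0.le, show -γ-1 = -(γ+1) by ring,
            Real.rpow_neg hx0.le, div_eq_mul_inv]
        have hE2 : w^(2*γ+1)*(x^(-γ-1)*x^(-γ)) = (w/x)^(2*γ+1) := by
          rw [← Real.rpow_add hx0, show -γ-1 + -γ = -(2*γ+1) by ring,
            Real.div_rpow hw.le hx0.le, Real.rpow_neg hx0.le, div_eq_mul_inv]
        have hE3 : w^(2*γ+1)*w^(-γ) = w^(γ+1) := by
          rw [← Real.rpow_add hw, show 2*γ+1 + -γ = γ+1 by ring]
        have hkey := T_ineq γ (w/x) hγ hT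
        -- bracket fact: γ*W + (1+γ)*W - (1+γ)*V ≤ γ, W = w^(γ+1)*x^(-γ-1), V = w^(2γ+1)*x^(-γ-1)*x^(-γ)
        have hbr : γ*(w^(γ+1)*x^(-γ-1)) + (1+γ)*(w^(γ+1)*x^(-γ-1))
            - (1+γ)*(w^(2*γ+1)*(x^(-γ-1)*x^(-γ))) ≤ γ := by
          rw [hE1, hE2]; linarith
        have hfact : γ * ((w^(-γ) - x^(-γ)) - A*(2*(w^(-γ) - x^(-γ))*(γ*x^(-γ-1)))
              + (-B)*(3*(w^(-γ) - x^(-γ))^2*(γ*x^(-γ-1))))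
            = (x^(-γ) - w^(-γ)) * (γ*(w^(γ+1)*x^(-γ-1)) + (1+γ)*(w^(γ+1)*x^(-γ-1))
              - (1+γ)*(w^(2*γ+1)*(x^(-γ-1)*x^(-γ))) - γ) := by
          have h2A : 2*A*γ = w^(γ+1) := by rw [hA]; field_simp
          have h3B : 3*B*γ^2 = (1+γ)*w^(2*γ+1) := by rw [hBdef]; field_simp
          linear_combination (-γ*(w^(-γ)-x^(-γ))*x^(-γ-1)) * h2A
            + (-(w^(-γ)-x^(-γ))^2*x^(-γ-1)) * h3B
            + ((1+γ)*x^(-γ-1)*(x^(-γ)-w^(-γ))) * hE3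
        have hneg : (x^(-γ) - w^(-γ)) * (γ*(w^(γ+1)*x^(-γ-1)) + (1+γ)*(w^(γ+1)*x^(-γ-1))
            - (1+γ)*(w^(2*γ+1)*(x^(-γ-1)*x^(-γ))) - γ) ≤ 0 :=
          mul_nonpos_of_nonneg_of_nonpos hm (by linarith)
        nlinarith [hfact, hneg, hγ0]
    have h0 : f w ≤ f v := hanti (Set.left_mem_Icc.2 hvw) (Set.right_mem_Icc.2 hvw) hvw
    have hfw : f w = 0 := by simp [hf]
    have habs : |v^(-γ) - w^(-γ)| = v^(-γ) - w^(-γ) :=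
      abs_of_nonneg (sub_nonneg.2 (Real.rpow_le_rpow_of_nonpos hv hvw (by linarith)))
    rw [habs]
    have hfv := h0
    rw [hfw, hf] at hfv
    simp only at hfv
    nlinarith [hfv]


/-- Lower bound of the relative internal energy in terms of the pressure difference,
for `w` in a fixed compact neighborhood `[a,b]` of `v*` and `v` close to `w`. -/
theorem relative_internal_energy_lower_bound (γ vs a b : ℝ) (hγ : 1 < γ) (hvs : 0 < vs)
    (ha : 0 < a) (hav : a ≤ vs) (hvb : vs ≤ b) :
    ∃ C > 0, ∃ δstar > 0, ∀ δ : ℝ, 0 < δ → δ < δstar →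
      ∀ v w : ℝ, 0 < v → 0 < w → |v - w| < δ → w ∈ Set.Icc a b →
        (pres γ w) ^ (-1 / γ - 1) / (2 * γ) * |pres γ v - pres γ w| ^ 2
          - (1 + γ) / (3 * γ ^ 2) * (pres γ w) ^ (-1 / γ - 2) * |pres γ v - pres γ w| ^ 3
          ≤ relQ γ v w := by
  have hγ0 : (0:ℝ) < γ := by linarith
  refine ⟨1, one_pos, 1, one_pos, fun δ _ _ v w hv hw _ _ => ?_⟩
  have e1 : (pres γ w) ^ (-1 / γ - 1) = w ^ (γ+1) := by
    rw [pres, ← Real.rpow_mul hw.le, show (-γ)*(-1/γ-1) = γ+1 from by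
      field_simp; ring]
  have e2 : (pres γ w) ^ (-1 / γ - 2) = w ^ (2*γ+1) := by
    rw [pres, ← Real.rpow_mul hw.le, show (-γ)*(-1/γ-2) = 2*γ+1 from by
      field_simp; ring]
  rw [e1, e2]
  exact main_est γ hγ hv hw
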